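/- Let S be a unital semigroup of partial isometries on a complex Hilbert space H such that the family Q(S) = {T T* : T in S} is commutative, and let T be an element of S. Then every element W of the semigroup S_0 generated by S ∪ {T T*} is a partial isometry, the family Q(S_0) is again a commuting family of projections, and the final projection W W* of every W in S_0 is a finite product of elements of Q(S). -/

import Mathlib

private theorem rw2' {M : Type*} [Semigroup M] {a b c : M} (h : a * b = c) (x : M) :
    a * (b * x) = c * x := by rw [← mul_assoc, h]

private theorem rw3' {M : Type*} [Semigroup M] {a b c d : M} (h : a * b * c = d) (x : M) :
    a * (b * (c * x)) = d * x := by rw [← mul_assoc, ← mul_assoc, h]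

private theorem cl3' {M : Type*} [Semigroup M] {a b c d : M} (h : a * b * c = d) :
    a * (b * c) = d := by rw [← mul_assoc, h]

private theorem comm_list_prod' {M : Type*} [Monoid M] (g : M) :
    ∀ l : List M, (∀ q ∈ l, g * q = q * g) → g * l.prod = l.prod * g
  | [], _ => by simp
  | q :: l, h => by
    have hq : g * q = q * g := h q List.mem_cons_self
    have ih := comm_list_prod' g l (fun x hx => h x (List.mem_cons_of_mem q hx))
    simp only [List.prod_cons]
    rw [← mul_assoc, hq, mul_assoc, ih, ← mul_assoc]

/-- If `P, Q` are self-adjoint idempotents in a C*-algebra and `PQ` is idempotent,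
then `P` and `Q` commute. -/
private theorem proj_comm' {E : Type*} [NormedRing E] [StarRing E] [CStarRing E]
    {P Q : E} (sP : star P = P) (sQ : star Q = Q) (hP : P * P = P) (hQ : Q * Q = Q)
    (h : P * Q * (P * Q) = P * Q) : P * Q = Q * P := by
  have h4 : ∀ x : E, P * (Q * (P * (Q * x))) = P * (Q * x) := fun x => by
    simpa only [mul_assoc] using congrArg (· * x) h
  have hz : (P * Q - P * Q * P) * star (P * Q - P * Q * P) = 0 := by
    simp only [star_sub, star_mul, sP, sQ, mul_sub, sub_mul, mul_assoc,
      rw2' hP, rw2' hQ, h4]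
    simp
  have hX : P * Q - P * Q * P = 0 := (CStarRing.mul_star_self_eq_zero_iff _).mp hz
  have hPQ : P * Q = P * Q * P := sub_eq_zero.mp hX
  have sPQP : star (P * Q * P) = P * Q * P := by
    simp only [star_mul, sP, sQ, ← mul_assoc]
  calc P * Q = P * Q * P := hPQ
    _ = star (P * Q * P) := sPQP.symm
    _ = star (P * Q) := by rw [← hPQ]
    _ = Q * P := by rw [star_mul, sP, sQ]

/-- Proposition 2.3: let `𝒮` be a unital semigroup of partial isometries with `Q(𝒮)`
commutative and let `T ∈ 𝒮`. Then every element `W` of the semigroup `𝒮₀` generated by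
`𝒮 ∪ {T T*}` is a partial isometry, its final projection `W W*` is a finite product of
elements of `Q(𝒮)`, and the final projections of elements of `𝒮₀` commute with one
another. -/
theorem semigroup_adjoin_final_projection {H : Type*} [NormedAddCommGroup H]
    [InnerProductSpace ℂ H] [CompleteSpace H] (𝒮 : Set (H →L[ℂ] H))
    (hmul : ∀ A ∈ 𝒮, ∀ B ∈ 𝒮, A * B ∈ 𝒮)
    (hone : (1 : H →L[ℂ] H) ∈ 𝒮)
    (hpi : ∀ A ∈ 𝒮, A * star A * A = A)
    (hQcomm : ∀ A ∈ 𝒮, ∀ B ∈ 𝒮,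
      (A * star A) * (B * star B) = (B * star B) * (A * star A))
    (T : H →L[ℂ] H) (hT : T ∈ 𝒮) :
    (∀ W ∈ Subsemigroup.closure (𝒮 ∪ {T * star T}), W * star W * W = W) ∧
    (∀ W ∈ Subsemigroup.closure (𝒮 ∪ {T * star T}),
      ∃ l : List (H →L[ℂ] H), (∀ x ∈ l, ∃ X ∈ 𝒮, x = X * star X) ∧
        W * star W = l.prod) ∧
    (∀ W ∈ Subsemigroup.closure (𝒮 ∪ {T * star T}),
      ∀ W' ∈ Subsemigroup.closure (𝒮 ∪ {T * star T}),
        (W * star W) * (W' * star W') = (W' * star W') * (W * star W)) := by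
  -- basic facts about elements of Q(𝒮)
  have qstar : ∀ q : H →L[ℂ] H, (∃ X ∈ 𝒮, q = X * star X) → star q = q := by
    rintro q ⟨X, hX, rfl⟩
    simp [star_mul, star_star]
  have qidem : ∀ q : H →L[ℂ] H, (∃ X ∈ 𝒮, q = X * star X) → q * q = q := by
    rintro q ⟨X, hX, rfl⟩
    simp only [mul_assoc, rw3' (hpi X hX)]
  have qcomm : ∀ q r : H →L[ℂ] H, (∃ X ∈ 𝒮, q = X * star X) → (∃ X ∈ 𝒮, r = X * star X) →
      q * r = r * q := by
    rintro q r ⟨X, hX, rfl⟩ ⟨Y, hY, rfl⟩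
    exact hQcomm X hX Y hY
  -- Lemma A : initial projections of 𝒮 commute with final projections of 𝒮
  have initcomm : ∀ A ∈ 𝒮, ∀ B ∈ 𝒮,
      (star A * A) * (B * star B) = (B * star B) * (star A * A) := by
    intro A hA B hB
    have sP : star (star A * A) = star A * A := by simp [star_mul, star_star]
    have sQ : star (B * star B) = B * star B := qstar _ ⟨B, hB, rfl⟩
    have hP : (star A * A) * (star A * A) = star A * A := by
      simp only [mul_assoc, cl3' (hpi A hA)]
    have hQ : (B * star B) * (B * star B) = B * star B := qidem _ ⟨B, hB, rfl⟩
    have key : (star A * A) * (B * star B) * ((star A * A) * (B * star B)) =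
        (star A * A) * (B * star B) := by
      have h1 := congrArg (fun X : H →L[ℂ] H => star A * X * star B) (hpi (A * B) (hmul A hA B hB))
      simp only [star_mul, mul_assoc] at h1
      simp only [mul_assoc]
      exact h1
    exact proj_comm' sP sQ hP hQ key
  -- the main induction
  have main : ∀ W ∈ Subsemigroup.closure (𝒮 ∪ {T * star T}),
      (W * star W * W = W) ∧
      (∀ l : List (H →L[ℂ] H), (∀ x ∈ l, ∃ X ∈ 𝒮, x = X * star X) →
        ∃ l' : List (H →L[ℂ] H), (∀ x ∈ l', ∃ X ∈ 𝒮, x = X * star X) ∧ W * l.prod * star W = l'.prod) ∧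
      (∀ q : H →L[ℂ] H, (∃ X ∈ 𝒮, q = X * star X) → (star W * W) * q = q * (star W * W)) := by
    intro W hW
    induction hW using Subsemigroup.closure_induction with
    | mem x hx =>
      rcases hx with hA | hP
      · -- x ∈ 𝒮
        refine ⟨hpi x hA, ?_, ?_⟩
        · intro l
          induction l with
          | nil =>
            intro _
            exact ⟨[x * star x], by rintro y hy; simp at hy; exact ⟨x, hA, hy⟩, by simp⟩
          | cons q l ih =>
            intro h
            obtain ⟨B, hB, hqB⟩ := h q List.mem_cons_self
            obtain ⟨l', hl'Q, hl'⟩ := ih (fun y hy => h y (List.mem_cons_of_mem q hy))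
            subst hqB
            refine ⟨(x * (B * star B) * star x) :: l', ?_, ?_⟩
            · intro y hy
              rcases List.mem_cons.mp hy with rfl | hy
              · refine ⟨x * B, hmul x hA B hB, ?_⟩
                simp only [star_mul, mul_assoc]
              · exact hl'Q y hy
            · simp only [List.prod_cons]
              rw [← hl']
              have hcq : (star x * x) * (B * star B) = (B * star B) * (star x * x) :=
                initcomm x hA B hB
              have hcq' : ∀ y : H →L[ℂ] H, B * (star B * (star x * (x * y))) =
                  star x * (x * (B * (star B * y))) := fun y => by
                simpa only [mul_assoc] using congrArg (· * y) hcq.symm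
              have : (x * (B * star B) * star x) * (x * l.prod * star x) =
                  x * ((B * star B) * l.prod) * star x := by
                simp only [mul_assoc]
                rw [hcq' (l.prod * star x), rw3' (hpi x hA)]
              exact this.symm
        · intro q hq
          obtain ⟨B, hB, rfl⟩ := hq
          exact initcomm x hA B hB
      · -- x = T * star T
        have hx : x = T * star T := hP
        have hxQ : ∃ X ∈ 𝒮, x = X * star X := ⟨T, hT, hx⟩
        have sx : star x = x := qstar x hxQ
        have ix : x * x = x := qidem x hxQ
        refine ⟨by rw [sx, ix, ix], ?_, ?_⟩
        · intro l hl
          have cpl : x * l.prod = l.prod * x :=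
            comm_list_prod' x l (fun y hy => qcomm x y hxQ (hl y hy))
          refine ⟨l ++ [x], ?_, ?_⟩
          · intro y hy
            rcases List.mem_append.mp hy with hy | hy
            · exact hl y hy
            · simp at hy; exact hy ▸ hxQ
          · rw [sx, cpl, mul_assoc, ix, List.prod_append, List.prod_cons, List.prod_nil,
              mul_one]
        · intro q hq
          rw [sx, ix]
          exact qcomm x q hxQ hq
    | mul U V hU hV ihU ihV =>
      obtain ⟨hU0, hU2, hU3⟩ := ihU
      obtain ⟨hV0, hV2, hV3⟩ := ihV
      -- V V* as a product of elements of Q(𝒮)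
      obtain ⟨lV, hlVQ, hlV⟩ := hV2 [] (by simp)
      have hVV : V * star V = lV.prod := by simpa using hlV
      have cUV : (star U * U) * (V * star V) = (V * star V) * (star U * U) := by
        rw [hVV]
        exact comm_list_prod' (star U * U) lV (fun q hq => hU3 q (hlVQ q hq))
      refine ⟨?_, ?_, ?_⟩
      · -- partial isometry
        have e1 : ∀ y : H →L[ℂ] H, star U * (U * (V * (star V * y))) =
            V * (star V * (star U * (U * y))) := fun y => by
          simpa only [mul_assoc] using congrArg (· * y) cUV
        simp only [star_mul, mul_assoc]
        rw [← e1 V, rw3' hU0, cl3' hV0]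
      · -- conjugation of products of Q(𝒮)
        intro l hl
        obtain ⟨l1, hl1Q, hl1⟩ := hV2 l hl
        obtain ⟨l2, hl2Q, hl2⟩ := hU2 l1 hl1Q
        refine ⟨l2, hl2Q, ?_⟩
        have e : ∀ y : H →L[ℂ] H, V * (l.prod * (star V * y)) = l1.prod * y := fun y => by
          simpa only [mul_assoc] using congrArg (· * y) hl1
        simp only [star_mul, mul_assoc]
        rw [e (star U), cl3' hl2]
      · -- initial projection commutes with Q(𝒮)
        intro q hq
        obtain ⟨m, hmQ, hm⟩ := hV2 [q] (by simpa using hq)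
        have hm' : V * q * star V = m.prod := by simpa using hm
        have cVq : (star V * V) * q = q * (star V * V) := hV3 q hq
        have cVq' : star V * (V * q) = q * (star V * V) := by
          simpa only [mul_assoc] using cVq
        have cVq2 : ∀ y : H →L[ℂ] H, star V * (V * (q * y)) = q * (star V * (V * y)) := fun y => by
          simpa only [mul_assoc] using congrArg (· * y) cVq
        have vq : V * q = V * (q * (star V * V)) := by
          conv_lhs => rw [← cl3' hV0]
          rw [mul_assoc, cVq]
        have hmapp : ∀ y : H →L[ℂ] H, V * (q * (star V * y)) = m.prod * y := fun y => by
          simpa only [mul_assoc] using congrArg (· * y) hm'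
        have hmc : V * (q * star V) = m.prod := by simpa only [mul_assoc] using hm'
        have cK : (star U * U) * m.prod = m.prod * (star U * U) :=
          comm_list_prod' (star U * U) m (fun y hy => hU3 y (hmQ y hy))
        have cK' : ∀ y : H →L[ℂ] H, star U * (U * (m.prod * y)) = m.prod * (star U * (U * y)) :=
          fun y => by simpa only [mul_assoc] using congrArg (· * y) cK
        have sVVV : star V * (V * star V) = star V := by
          simpa only [star_mul, star_star, mul_assoc] using congrArg star hV0
        have sVVV' : ∀ y : H →L[ℂ] H, star V * (V * (star V * y)) = star V * y := fun y => by
          simpa only [mul_assoc] using congrArg (· * y) sVVV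
        simp only [star_mul, mul_assoc]
        rw [vq, hmapp V, cK' V, ← hmc]
        simp only [mul_assoc]
        rw [cVq2 (star V * (star U * (U * V))), sVVV' (star U * (U * V))]
  refine ⟨fun W hW => (main W hW).1, fun W hW => ?_, fun W hW W' hW' => ?_⟩
  · obtain ⟨l, hlQ, hl⟩ := (main W hW).2.1 [] (by simp)
    exact ⟨l, hlQ, by simpa using hl⟩
  · obtain ⟨l, hlQ, hl⟩ := (main W hW).2.1 [] (by simp)
    obtain ⟨l', hl'Q, hl'⟩ := (main W' hW').2.1 [] (by simp)
    have h1 : W * star W = l.prod := by simpa using hl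
    have h2 : W' * star W' = l'.prod := by simpa using hl'
    rw [h1, h2]
    exact comm_list_prod' l.prod l' (fun q hq =>
      (comm_list_prod' q l (fun r hr => qcomm q r (hl'Q q hq) (hlQ r hr))).symm)
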